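/- Let L ≥ 1 and m ≥ 1 be integers, a ≥ 0 an integer, and let s, r be real numbers with r > 0 and L·r ≤ s. Write (x)^+ = max(x, 0). Then the infimum over all families α = (α_{j,i}) ∈ ℝ^{L×m} satisfying α_{j,1} ≥ α_{j,2} ≥ ⋯ ≥ α_{j,m} ≥ 0 for each j = 1, …, L and Σ_{j=1}^L Σ_{i=1}^m [ (s − α_{j,i})^+ − (s − L·r − α_{j,i})^+ ] < L·r, of the quantity Σ_{j=1}^L Σ_{i=1}^m (a + 2i − 1)·α_{j,i}, equals L·[ (m·a + m²)·s − (a + 2m − 1)·r ]. -/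

import Mathlib

lemma sum_c16 (a : ℕ) : ∀ m : ℕ,
    ∑ i : Fin m, ((a : ℝ) + 2 * ((i : ℕ) : ℝ) + 1) = (m : ℝ) * a + (m : ℝ) ^ 2 := by
  intro m
  induction m with
  | zero => simp
  | succ n ih =>
    rw [Fin.sum_univ_castSucc]
    simp only [Fin.coe_castSucc, Fin.val_last, ih]
    push_cast
    ring

lemma aux_point16 (s T x c C : ℝ) (hT : 0 < T) (hc : 0 ≤ c) (hcC : c ≤ C)
    (hg : max (s - x) 0 - max (s - T - x) 0 < T) :
    c * s - C * (max (s - x) 0 - max (s - T - x) 0) ≤ c * x := by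
  rcases le_or_gt s x with h | h
  · rw [max_eq_right (by linarith), max_eq_right (by linarith)]
    nlinarith
  · have hx2 : s - T < x := by
      by_contra h2
      push_neg at h2
      rw [max_eq_left (by linarith), max_eq_left (by linarith)] at hg
      linarith
    rw [max_eq_left (by linarith), max_eq_right (by linarith)]
    nlinarith [mul_nonneg (sub_nonneg.mpr hcC) (sub_nonneg.mpr h.le)]


/-- The optimization underlying the successive decoding diversity gain of the
broadcast strategy over an `L`-block MIMO channel: for `r > 0` with
`L·r ≤ s`, the infimum of `Σ_{j=1}^L Σ_{i=1}^m (a + 2i - 1) α_{j,i}` over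
families `α` that are nonincreasing and nonnegative in `i` for each block `j`
and satisfy `Σ_j Σ_i [(s - α_{j,i})^+ - (s - Lr - α_{j,i})^+] < Lr` equals
`L[(ma + m²)s - (a + 2m - 1)r]`. -/
theorem stmt_16 (L m : ℕ) (hL : 1 ≤ L) (hm : 1 ≤ m) (a : ℕ) (s r : ℝ)
    (hr : 0 < r) (hrs : (L : ℝ) * r ≤ s) :
    IsGLB
      { y : ℝ | ∃ α : Fin L → Fin m → ℝ,
          (∀ j, ∀ i i' : Fin m, i ≤ i' → α j i' ≤ α j i) ∧
          (∀ j i, 0 ≤ α j i) ∧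
          (∑ j : Fin L, ∑ i : Fin m,
            (max (s - α j i) 0 - max (s - (L : ℝ) * r - α j i) 0)) < (L : ℝ) * r ∧
          y = ∑ j : Fin L, ∑ i : Fin m,
            ((a : ℝ) + 2 * ((i : ℕ) : ℝ) + 1) * α j i }
      ((L : ℝ) * (((m : ℝ) * a + (m : ℝ) ^ 2) * s - ((a : ℝ) + 2 * m - 1) * r)) := by
  have hL1 : (1 : ℝ) ≤ (L : ℝ) := by exact_mod_cast hL
  have hm1 : (1 : ℝ) ≤ (m : ℝ) := by exact_mod_cast hm
  have hLpos : (0 : ℝ) < L := by linarith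
  have hTpos : (0 : ℝ) < (L : ℝ) * r := mul_pos hLpos hr
  have hrT : r ≤ (L : ℝ) * r := le_mul_of_one_le_left hr.le hL1
  have hspos : 0 < s := lt_of_lt_of_le hTpos hrs
  have hC1 : (1 : ℝ) ≤ (a : ℝ) + 2 * m - 1 := by
    have ha : (0 : ℝ) ≤ (a : ℝ) := Nat.cast_nonneg a
    linarith
  have hcC : ∀ i : Fin m, (a : ℝ) + 2 * ((i : ℕ) : ℝ) + 1 ≤ (a : ℝ) + 2 * m - 1 := by
    intro i
    have : ((i : ℕ) : ℝ) + 1 ≤ (m : ℝ) := by exact_mod_cast i.isLt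
    linarith
  have hcpos : ∀ i : Fin m, (0 : ℝ) ≤ (a : ℝ) + 2 * ((i : ℕ) : ℝ) + 1 := by
    intro i
    have ha : (0 : ℝ) ≤ (a : ℝ) := Nat.cast_nonneg a
    have hi : (0 : ℝ) ≤ ((i : ℕ) : ℝ) := Nat.cast_nonneg _
    linarith
  constructor
  · -- lower bound
    rintro y ⟨α, hmono, hpos, hcon, rfl⟩
    -- each g term is nonneg
    have hgnn : ∀ j i, 0 ≤ max (s - α j i) 0 - max (s - (L : ℝ) * r - α j i) 0 := by
      intro j i
      have : s - (L : ℝ) * r - α j i ≤ s - α j i := by linarith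
      exact sub_nonneg.mpr (max_le_max this le_rfl)
    have hinn : ∀ j : Fin L, 0 ≤ ∑ i : Fin m,
        (max (s - α j i) 0 - max (s - (L : ℝ) * r - α j i) 0) := by
      intro j
      exact Finset.sum_nonneg fun i _ => hgnn j i
    have hterm : ∀ j i,
        max (s - α j i) 0 - max (s - (L : ℝ) * r - α j i) 0 < (L : ℝ) * r := by
      intro j i
      calc max (s - α j i) 0 - max (s - (L : ℝ) * r - α j i) 0
          ≤ ∑ i' : Fin m, (max (s - α j i') 0 - max (s - (L : ℝ) * r - α j i') 0) :=
            Finset.single_le_sum (fun i' _ => hgnn j i') (Finset.mem_univ i)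
        _ ≤ ∑ j' : Fin L, ∑ i' : Fin m,
              (max (s - α j' i') 0 - max (s - (L : ℝ) * r - α j' i') 0) :=
            Finset.single_le_sum (fun j' _ => hinn j') (Finset.mem_univ j)
        _ < (L : ℝ) * r := hcon
    have key : ∀ (j : Fin L) (i : Fin m), ((a : ℝ) + 2 * ((i : ℕ) : ℝ) + 1) * s -
        ((a : ℝ) + 2 * m - 1) * (max (s - α j i) 0 - max (s - (L : ℝ) * r - α j i) 0)
        ≤ ((a : ℝ) + 2 * ((i : ℕ) : ℝ) + 1) * α j i := by
      intro j i
      exact aux_point16 s ((L : ℝ) * r) (α j i) _ _ hTpos (hcpos i) (hcC i) (hterm j i)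
    have h1 : ∑ j : Fin L, ∑ i : Fin m,
        (((a : ℝ) + 2 * ((i : ℕ) : ℝ) + 1) * s -
          ((a : ℝ) + 2 * m - 1) * (max (s - α j i) 0 - max (s - (L : ℝ) * r - α j i) 0))
        ≤ ∑ j : Fin L, ∑ i : Fin m, ((a : ℝ) + 2 * ((i : ℕ) : ℝ) + 1) * α j i := by
      refine Finset.sum_le_sum fun j _ => Finset.sum_le_sum fun i _ => key j i
    have h2 : ∑ j : Fin L, ∑ i : Fin m,
        (((a : ℝ) + 2 * ((i : ℕ) : ℝ) + 1) * s -
          ((a : ℝ) + 2 * m - 1) * (max (s - α j i) 0 - max (s - (L : ℝ) * r - α j i) 0))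
        = (L : ℝ) * (((m : ℝ) * a + (m : ℝ) ^ 2) * s)
          - ((a : ℝ) + 2 * m - 1) * ∑ j : Fin L, ∑ i : Fin m,
              (max (s - α j i) 0 - max (s - (L : ℝ) * r - α j i) 0) := by
      have hcs : ∀ j : Fin L, ∑ i : Fin m, ((a : ℝ) + 2 * ((i : ℕ) : ℝ) + 1) * s
          = ((m : ℝ) * a + (m : ℝ) ^ 2) * s := by
        intro j
        rw [← Finset.sum_mul, sum_c16 a m]
      rw [Finset.sum_congr rfl fun j _ => Finset.sum_sub_distrib _ _, Finset.sum_sub_distrib]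
      congr 1
      · rw [Finset.sum_congr rfl fun j _ => hcs j, Finset.sum_const, Finset.card_univ,
          Fintype.card_fin, nsmul_eq_mul]
      · rw [Finset.mul_sum]
        exact Finset.sum_congr rfl fun j _ => (Finset.mul_sum _ _ _).symm
    have h3 : ((a : ℝ) + 2 * m - 1) * (∑ j : Fin L, ∑ i : Fin m,
        (max (s - α j i) 0 - max (s - (L : ℝ) * r - α j i) 0))
        ≤ ((a : ℝ) + 2 * m - 1) * ((L : ℝ) * r) :=
      mul_le_mul_of_nonneg_left hcon.le (by linarith)
    have heq : (L : ℝ) * (((m : ℝ) * a + (m : ℝ) ^ 2) * s - ((a : ℝ) + 2 * m - 1) * r)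
        = (L : ℝ) * (((m : ℝ) * a + (m : ℝ) ^ 2) * s)
          - ((a : ℝ) + 2 * m - 1) * ((L : ℝ) * r) := by ring
    linarith
  · -- greatest lower bound
    intro b hb
    refine le_of_forall_pos_le_add fun ε hε => ?_
    set C := (a : ℝ) + 2 * m - 1 with hCdef
    have hLC : (0 : ℝ) < (L : ℝ) * C := mul_pos hLpos (by linarith)
    set δ := r - min (ε / ((L : ℝ) * C)) r with hδdef
    have hδ0 : 0 ≤ δ := by
      have := min_le_right (ε / ((L : ℝ) * C)) r
      simp only [hδdef]; linarith
    have hδr : δ < r := by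
      have h1 : 0 < min (ε / ((L : ℝ) * C)) r := lt_min (div_pos hε hLC) hr
      simp only [hδdef]; linarith
    have hrd : (L : ℝ) * C * (r - δ) ≤ ε := by
      have h1 : r - δ ≤ ε / ((L : ℝ) * C) := by
        simp only [hδdef]
        have := min_le_left (ε / ((L : ℝ) * C)) r
        linarith
      calc (L : ℝ) * C * (r - δ) ≤ (L : ℝ) * C * (ε / ((L : ℝ) * C)) :=
            mul_le_mul_of_nonneg_left h1 hLC.le
        _ = ε := by field_simp
    -- the witness
    set α : Fin L → Fin m → ℝ := fun _ i => if (i : ℕ) + 1 = m then s - δ else s with hα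
    have hmem : ((L : ℝ) * (((m : ℝ) * a + (m : ℝ) ^ 2) * s - C * δ)) ∈
        { y : ℝ | ∃ α : Fin L → Fin m → ℝ,
          (∀ j, ∀ i i' : Fin m, i ≤ i' → α j i' ≤ α j i) ∧
          (∀ j i, 0 ≤ α j i) ∧
          (∑ j : Fin L, ∑ i : Fin m,
            (max (s - α j i) 0 - max (s - (L : ℝ) * r - α j i) 0)) < (L : ℝ) * r ∧
          y = ∑ j : Fin L, ∑ i : Fin m,
            ((a : ℝ) + 2 * ((i : ℕ) : ℝ) + 1) * α j i } := by
      refine ⟨α, ?_, ?_, ?_, ?_⟩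
      · intro j i i' hii'
        simp only [hα]
        by_cases hi : (i : ℕ) + 1 = m
        · have : (i' : ℕ) = (i : ℕ) := le_antisymm (by omega) hii'
          rw [if_pos hi, if_pos (by omega)]
        · rw [if_neg hi]
          split <;> linarith
      · intro j i
        simp only [hα]
        split <;> linarith
      · have hin : ∀ j : Fin L, ∑ i : Fin m,
            (max (s - α j i) 0 - max (s - (L : ℝ) * r - α j i) 0) = δ := by
          intro j
          have : ∀ i : Fin m, max (s - α j i) 0 - max (s - (L : ℝ) * r - α j i) 0
              = if (i : ℕ) + 1 = m then δ else 0 := by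
            intro i
            simp only [hα]
            by_cases hi : (i : ℕ) + 1 = m
            · rw [if_pos hi, if_pos hi]
              rw [max_eq_left (by linarith), max_eq_right (by linarith)]
              ring
            · rw [if_neg hi, if_neg hi]
              rw [sub_self, max_self, max_eq_right (by linarith)]
              ring
          rw [Finset.sum_congr rfl fun i _ => this i]
          rw [Finset.sum_eq_single (⟨m - 1, by omega⟩ : Fin m)]
          · rw [if_pos (by simp; omega)]
          · intro i _ hne
            rw [if_neg]
            intro h
            exact hne (by apply Fin.ext; simp; omega)
          · intro h
            exact absurd (Finset.mem_univ _) h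
        rw [Finset.sum_congr rfl fun j _ => hin j, Finset.sum_const, Finset.card_univ,
          Fintype.card_fin, nsmul_eq_mul]
        exact mul_lt_mul_of_pos_left hδr hLpos
      · have hin : ∀ j : Fin L, ∑ i : Fin m,
            ((a : ℝ) + 2 * ((i : ℕ) : ℝ) + 1) * α j i
            = ((m : ℝ) * a + (m : ℝ) ^ 2) * s - C * δ := by
          intro j
          have : ∀ i : Fin m, ((a : ℝ) + 2 * ((i : ℕ) : ℝ) + 1) * α j i
              = ((a : ℝ) + 2 * ((i : ℕ) : ℝ) + 1) * s -
                (if (i : ℕ) + 1 = m then ((a : ℝ) + 2 * ((i : ℕ) : ℝ) + 1) * δ else 0) := by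
            intro i
            simp only [hα]
            by_cases hi : (i : ℕ) + 1 = m
            · rw [if_pos hi, if_pos hi]; ring
            · rw [if_neg hi, if_neg hi]; ring
          rw [Finset.sum_congr rfl fun i _ => this i, Finset.sum_sub_distrib,
            ← Finset.sum_mul, sum_c16 a m]
          congr 1
          rw [Finset.sum_eq_single (⟨m - 1, by omega⟩ : Fin m)]
          · rw [if_pos (by simp; omega)]
            have hcast : (((⟨m - 1, by omega⟩ : Fin m) : ℕ) : ℝ) = (m : ℝ) - 1 := by
              have h1 : ((⟨m - 1, by omega⟩ : Fin m) : ℕ) = m - 1 := rfl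
              rw [h1, Nat.cast_sub hm, Nat.cast_one]
            rw [hcast, hCdef]
            ring
          · intro i _ hne
            rw [if_neg]
            intro h
            exact hne (by apply Fin.ext; simp; omega)
          · intro h
            exact absurd (Finset.mem_univ _) h
        rw [Finset.sum_congr rfl fun j _ => hin j, Finset.sum_const, Finset.card_univ,
          Fintype.card_fin, nsmul_eq_mul]
    have hb1 := hb hmem
    have heq : (L : ℝ) * (((m : ℝ) * a + (m : ℝ) ^ 2) * s - C * δ)
        = (L : ℝ) * (((m : ℝ) * a + (m : ℝ) ^ 2) * s - C * r) + (L : ℝ) * C * (r - δ) := by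
      ring
    rw [hCdef] at heq
    linarith [heq ▸ hb1]
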